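/- In the sequential setting with Borda valuations over T rounds with n agents and m candidates, there exists an outcome (one candidate per round, chosen online round by round) such that every agent's total utility is at least floor(T(m-1)/n). In particular, every agent's utility is strictly greater than T(m-1)/n - 1, so this outcome is a 1-additive approximation of proportionality. -/

import Mathlib

open Finset

lemma sumdiv (n : ℕ) (hn : 0 < n) (a : ℕ) :
    ∑ i ∈ Finset.range n, (a + i) / n = a := by
  induction a with
  | zero =>
    apply Finset.sum_eq_zero
    intro i hi
    exact Nat.div_eq_of_lt (by simpa using Finset.mem_range.mp hi)
  | succ a ih =>
    have h0 : ∑ i ∈ Finset.range (n+1), (a + i)/n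
        = (∑ i ∈ Finset.range n, (a+i)/n) + (a+n)/n := Finset.sum_range_succ _ n
    have h1 : ∑ i ∈ Finset.range (n+1), (a + i)/n
        = (∑ i ∈ Finset.range n, (a+(i+1))/n) + (a+0)/n := Finset.sum_range_succ' _ n
    have h2 : ∑ i ∈ Finset.range n, (a+1+i)/n = ∑ i ∈ Finset.range n, (a+(i+1))/n := by
      apply Finset.sum_congr rfl
      intro i _
      congr 1
      omega
    have h3 : (a+n)/n = a/n + 1 := Nat.add_div_right _ hn
    simp only [Nat.add_zero] at h1
    rw [ih] at h0
    rw [h2]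
    omega

lemma exists_good (n m : ℕ) (w : Fin n → Fin m ≃ Fin m) (g : Fin n → ℕ)
    (hg : ∑ i, g i < m) : ∃ c : Fin m, ∀ i, g i ≤ ((w i c : Fin m) : ℕ) := by
  by_contra h
  push_neg at h
  have hsub : (Finset.univ : Finset (Fin m)) ⊆ Finset.univ.biUnion
      (fun i : Fin n => Finset.univ.filter (fun c : Fin m => ((w i c : Fin m) : ℕ) < g i)) := by
    intro c _
    obtain ⟨i, hi⟩ := h c
    exact Finset.mem_biUnion.mpr ⟨i, Finset.mem_univ i,
      Finset.mem_filter.mpr ⟨Finset.mem_univ c, hi⟩⟩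
  have hcard := Finset.card_le_card hsub
  have hbu := Finset.card_biUnion_le (s := (Finset.univ : Finset (Fin n)))
    (t := fun i : Fin n => Finset.univ.filter (fun c : Fin m => ((w i c : Fin m) : ℕ) < g i))
  have hb : ∀ i : Fin n,
      (Finset.univ.filter (fun c : Fin m => ((w i c : Fin m) : ℕ) < g i)).card ≤ g i := by
    intro i
    have hle : (Finset.univ.filter (fun c : Fin m => ((w i c : Fin m) : ℕ) < g i)).card
        ≤ (Finset.range (g i)).card := by
      apply Finset.card_le_card_of_injOn (fun c => ((w i c : Fin m) : ℕ))
      · intro c hc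
        simp only [Finset.mem_coe, Finset.mem_filter] at hc
        exact Finset.mem_range.mpr hc.2
      · intro a _ b _ hab
        exact (w i).injective (Fin.val_injective hab)
    simpa using hle
  have hsum : ∑ i : Fin n, (Finset.univ.filter
      (fun c : Fin m => ((w i c : Fin m) : ℕ) < g i)).card ≤ ∑ i, g i :=
    Finset.sum_le_sum fun i _ => hb i
  have hm' : (Finset.univ : Finset (Fin m)).card = m := Finset.card_univ.trans (Fintype.card_fin m)
  omega

theorem stmt_10 (n m T : ℕ) (hn : 0 < n) (hm : 0 < m)
    (v : Fin T → Fin n → (Fin m ≃ Fin m)) :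
    ∃ o : Fin T → Fin m, ∀ i : Fin n,
      T * (m - 1) / n ≤ ∑ t, ((v t i (o t) : Fin m) : ℕ) ∧
      (T : ℝ) * ((m : ℝ) - 1) / n - 1 < ((∑ t, ((v t i (o t) : Fin m) : ℕ) : ℕ) : ℝ) := by
  -- quota of agent i in round t
  set q : ℕ → Fin n → ℕ :=
    fun t i => ((t+1)*(m-1) + i)/n - (t*(m-1) + i)/n with hq
  have hmono : ∀ t (i : Fin n), (t*(m-1) + i)/n ≤ ((t+1)*(m-1) + i)/n :=
    fun t i => Nat.div_le_div_right (by nlinarith)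
  have hsumq : ∀ t : ℕ, ∑ i : Fin n, q t i = m - 1 := by
    intro t
    have e1 : ∑ i : Fin n, q t i
        = (∑ i : Fin n, ((t+1)*(m-1) + (i:ℕ))/n) - (∑ i : Fin n, (t*(m-1) + (i:ℕ))/n) := by
      rw [hq]
      exact Finset.sum_tsub_distrib _ (fun i _ => hmono t i)
    have e2 : ∑ i : Fin n, ((t+1)*(m-1) + (i:ℕ))/n = (t+1)*(m-1) := by
      rw [Fin.sum_univ_eq_sum_range (fun i => ((t+1)*(m-1) + i)/n)]
      exact sumdiv n hn _
    have e3 : ∑ i : Fin n, (t*(m-1) + (i:ℕ))/n = t*(m-1) := by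
      rw [Fin.sum_univ_eq_sum_range (fun i => (t*(m-1) + i)/n)]
      exact sumdiv n hn _
    rw [e1, e2, e3]
    have : (t+1)*(m-1) = t*(m-1) + (m-1) := by ring
    omega
  have hex : ∀ t : Fin T, ∃ c : Fin m, ∀ i, q t i ≤ ((v t i c : Fin m) : ℕ) := by
    intro t
    apply exists_good n m (v t)
    rw [hsumq]
    omega
  choose o ho using hex
  refine ⟨o, fun i => ?_⟩
  have hlow : (T*(m-1) + i)/n ≤ ∑ t, ((v t i (o t) : Fin m) : ℕ) := by
    have h1 : ∑ t : Fin T, q t i ≤ ∑ t, ((v t i (o t) : Fin m) : ℕ) :=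
      Finset.sum_le_sum fun t _ => ho t i
    have h2 : ∑ t : Fin T, q (t:ℕ) i = (T*(m-1) + i)/n - (0*(m-1) + i)/n := by
      rw [Fin.sum_univ_eq_sum_range (fun t => q t i)]
      rw [hq]
      exact Finset.sum_range_tsub (f := fun t => (t*(m-1) + (i:ℕ))/n)
        (fun a b hab => Nat.div_le_div_right (by nlinarith)) T
    have h3 : (0*(m-1) + (i:ℕ))/n = 0 := Nat.div_eq_of_lt (by simpa using i.isLt)
    omega
  have hlow2 : T*(m-1)/n ≤ ∑ t, ((v t i (o t) : Fin m) : ℕ) :=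
    le_trans (Nat.div_le_div_right (Nat.le_add_right _ _)) hlow
  refine ⟨hlow2, ?_⟩
  -- real part
  have hmr : (T : ℝ) * ((m : ℝ) - 1) = ((T*(m-1) : ℕ) : ℝ) := by
    have : ((m:ℝ) - 1) = ((m - 1 : ℕ) : ℝ) := by
      rw [Nat.cast_sub hm]; simp
    rw [this]
    push_cast
    ring
  set a := T*(m-1) with ha
  have key : (a : ℝ)/n - 1 < ((a/n : ℕ) : ℝ) := by
    have h1 : a < n*(a/n) + n := by
      calc a = n*(a/n) + a % n := (Nat.div_add_mod a n).symm
      _ < n*(a/n) + n := Nat.add_lt_add_left (Nat.mod_lt a hn) _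
    have hn' : (0:ℝ) < n := by exact_mod_cast hn
    have h1' : (a:ℝ) < n*((a/n : ℕ):ℝ) + n := by exact_mod_cast h1
    rw [div_sub_one (ne_of_gt hn'), div_lt_iff₀ hn']
    nlinarith [h1']
  have hle : ((a/n : ℕ) : ℝ) ≤ ((∑ t, ((v t i (o t) : Fin m) : ℕ) : ℕ) : ℝ) := by
    exact_mod_cast hlow2
  rw [hmr]
  linarith
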